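/- Let K be a group and let H be a subgroup of K contained in the hypercentre of K. If K has property (χ) with respect to H (that is, Hom(K/H^K, Z(H)) = 0), then the normal closure N = H^K also has property (χ) with respect to H (that is, Hom(N/H^N, Z(H)) = 0). -/

import Mathlib

universe u

theorem Subgroup.normal_iSup_of_normal {G : Type u} [Group G] {ι : Sort*}
    (f : ι → Subgroup G) (h : ∀ i, (f i).Normal) : (⨆ i, f i).Normal := by
  constructor
  intro x hx g
  refine Subgroup.iSup_induction (C := fun y => g * y * g⁻¹ ∈ ⨆ i, f i) f hx
    (fun i y hy => le_iSup f i ((h i).conj_mem y hy g)) (by simpa using Subgroup.one_mem _) ?_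
  intro a b ha hb
  have hab : g * (a * b) * g⁻¹ = (g * a * g⁻¹) * (g * b * g⁻¹) := by group
  rw [hab]; exact mul_mem ha hb

/-- The transfinite upper central series of a group, as ordinal-indexed normal subgroups. -/
noncomputable def transUpperCentralSeriesAux (G : Type u) [Group G] :
    Ordinal.{u} → {H : Subgroup G // H.Normal} := fun o =>
  Ordinal.limitRecOn o
    ⟨⊥, inferInstance⟩
    (fun _ Z => ⟨@Subgroup.upperCentralSeriesStep G _ Z.1 Z.2, by
      haveI := Z.2; rw [Subgroup.upperCentralSeriesStep_eq_comap_center]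
      exact Subgroup.Normal.comap inferInstance _⟩)
    (fun o _ ih => ⟨⨆ (o' : Ordinal.{u}) (ho' : o' < o), (ih o' ho').1,
      Subgroup.normal_iSup_of_normal _ fun o' =>
        Subgroup.normal_iSup_of_normal _ fun ho' => (ih o' ho').2⟩)

/-- The transfinite upper central series. -/
noncomputable def transUpperCentralSeries (G : Type u) [Group G] (o : Ordinal.{u}) :
    Subgroup G := (transUpperCentralSeriesAux G o).1

/-- The hypercentre of a group: the union of the transfinite upper central series. -/
noncomputable def hypercenter (G : Type u) [Group G] : Subgroup G :=
  ⨆ o : Ordinal.{u}, transUpperCentralSeries G o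

/-- A group is hypercentral if it equals the union of its transfinite upper central series. -/
def IsHypercentral (G : Type u) [Group G] : Prop := hypercenter G = ⊤

/-- The hypercentral length: the least ordinal `o` with `Z_o(G) = G`. -/
noncomputable def hypercentralLength (G : Type u) [Group G] : Ordinal.{u} :=
  sInf {o : Ordinal.{u} | transUpperCentralSeries G o = ⊤}

/-- A group is locally nilpotent if every finitely generated subgroup is nilpotent. -/
def IsLocallyNilpotent (G : Type*) [Group G] : Prop :=
  ∀ S : Subgroup G, S.FG → Group.IsNilpotent S

-- aux lemmas
theorem tucs_zero (G : Type u) [Group G] : transUpperCentralSeries G 0 = ⊥ := by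
  show (transUpperCentralSeriesAux G 0).1 = ⊥
  simp only [transUpperCentralSeriesAux, Ordinal.limitRecOn_zero]

theorem tucs_succ (G : Type u) [Group G] (o : Ordinal.{u}) :
    transUpperCentralSeries G (Order.succ o) =
      @Subgroup.upperCentralSeriesStep G _ (transUpperCentralSeries G o)
        (transUpperCentralSeriesAux G o).2 := by
  show (transUpperCentralSeriesAux G (Order.succ o)).1 = _
  simp only [transUpperCentralSeriesAux, Ordinal.limitRecOn_succ]
  rfl

theorem tucs_limit (G : Type u) [Group G] {o : Ordinal.{u}} (h : Order.IsSuccLimit o) :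
    transUpperCentralSeries G o =
      ⨆ (o' : Ordinal.{u}) (_ : o' < o), transUpperCentralSeries G o' := by
  show (transUpperCentralSeriesAux G o).1 = _
  simp only [transUpperCentralSeriesAux, Ordinal.limitRecOn_limit _ _ _ _ h]
  rfl

theorem tucs_normal (G : Type u) [Group G] (o : Ordinal.{u}) :
    (transUpperCentralSeries G o).Normal := (transUpperCentralSeriesAux G o).2

theorem tucs_le_succ (G : Type u) [Group G] (o : Ordinal.{u}) :
    transUpperCentralSeries G o ≤ transUpperCentralSeries G (Order.succ o) := by
  rw [tucs_succ]
  intro x hx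
  haveI := tucs_normal G o
  show ∀ y, x * y * x⁻¹ * y⁻¹ ∈ transUpperCentralSeries G o
  intro y
  have h1 : x * y * x⁻¹ * y⁻¹ = x * (y * x⁻¹ * y⁻¹) := by group
  rw [h1]
  exact mul_mem hx ((tucs_normal G o).conj_mem _ (inv_mem hx) y)

theorem tucs_mono (G : Type u) [Group G] (β : Ordinal.{u}) :
    ∀ γ : Ordinal.{u}, β ≤ γ → transUpperCentralSeries G β ≤ transUpperCentralSeries G γ := by
  intro γ
  induction γ using Ordinal.induction with
  | h γ ih =>
    intro hβγ
    rcases Ordinal.zero_or_succ_or_isSuccLimit γ with rfl | ⟨δ, rfl⟩ | hlim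
    · rw [nonpos_iff_eq_zero] at hβγ; subst hβγ; exact le_rfl
    · rcases hβγ.lt_or_eq with hlt | rfl
      · exact le_trans (ih δ (Order.lt_succ δ) (Order.lt_succ_iff.1 hlt)) (tucs_le_succ G δ)
      · exact le_rfl
    · rcases hβγ.lt_or_eq with hlt | rfl
      · rw [tucs_limit G hlim]
        exact le_iSup₂ (f := fun (o' : Ordinal.{u}) (_ : o' < γ) =>
          transUpperCentralSeries G o') β hlt
      · exact le_rfl

theorem tucs_mem_limit (G : Type u) [Group G] {γ : Ordinal.{u}} (hlim : Order.IsSuccLimit γ)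
    {x : G} (hx : x ∈ transUpperCentralSeries G γ) :
    ∃ β < γ, x ∈ transUpperCentralSeries G β := by
  rw [tucs_limit G hlim, iSup_subtype'] at hx
  haveI : Nonempty {β : Ordinal.{u} // β < γ} := ⟨⟨0, hlim.pos⟩⟩
  have hdir : Directed (· ≤ ·)
      (fun i : {β : Ordinal.{u} // β < γ} => transUpperCentralSeries G i.1) := by
    intro i j
    rcases le_total i.1 j.1 with hij | hij
    · exact ⟨j, tucs_mono G _ _ hij, le_rfl⟩
    · exact ⟨i, le_rfl, tucs_mono G _ _ hij⟩
  rcases (Subgroup.mem_iSup_of_directed hdir).1 hx with ⟨⟨β, hβ⟩, hmem⟩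
  exact ⟨β, hβ, hmem⟩

theorem mem_hypercenter_iff (G : Type u) [Group G] {x : G} (hx : x ∈ hypercenter G) :
    ∃ o : Ordinal.{u}, x ∈ transUpperCentralSeries G o := by
  have hdir : Directed (· ≤ ·) (transUpperCentralSeries G) := by
    intro i j
    rcases le_total i j with hij | hij
    · exact ⟨j, tucs_mono G _ _ hij, le_rfl⟩
    · exact ⟨i, le_rfl, tucs_mono G _ _ hij⟩
  exact (Subgroup.mem_iSup_of_directed hdir).1 hx

theorem hypercenter_normal (G : Type u) [Group G] : (hypercenter G).Normal :=
  Subgroup.normal_iSup_of_normal _ fun o => tucs_normal G o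

open scoped commutatorElement in
theorem chi_invariant {K : Type u} [Group K] (N : Subgroup K) (hNn : N.Normal)
    {A : Type u} [CommGroup A] (F : N →* A)
    (hchi : ∀ g : K →* A, (∀ n ∈ N, g n = 1) → ∀ k : K, g k = 1) :
    ∀ γ : Ordinal.{u}, ∀ x : K, ∀ hx : x ∈ N, x ∈ transUpperCentralSeries K γ →
      ∀ k : K, F ⟨k * x * k⁻¹, hNn.conj_mem x hx k⟩ = F ⟨x, hx⟩ := by
  intro γ
  induction γ using Ordinal.induction with
  | h γ ih =>
    intro x hx hxZ k
    rcases Ordinal.zero_or_succ_or_isSuccLimit γ with rfl | ⟨δ, rfl⟩ | hlim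
    · rw [tucs_zero] at hxZ
      have hx1 : x = 1 := Subgroup.mem_bot.1 hxZ
      subst hx1
      congr 1
      exact Subtype.ext (by group)
    · -- successor case
      haveI := tucs_normal K δ
      rw [tucs_succ] at hxZ
      have hcommN : ∀ k' : K, k' * x * k'⁻¹ * x⁻¹ ∈ N := fun k' =>
        mul_mem (hNn.conj_mem x hx k') (inv_mem hx)
      have hcommZ : ∀ k' : K, k' * x * k'⁻¹ * x⁻¹ ∈ transUpperCentralSeries K δ := by
        intro k'
        have h1 : x * k' * x⁻¹ * k'⁻¹ ∈ transUpperCentralSeries K δ :=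
          (Subgroup.mem_upperCentralSeriesStep _ x).1 hxZ k'
        have h2 := inv_mem h1
        have h3 : (x * k' * x⁻¹ * k'⁻¹)⁻¹ = k' * x * k'⁻¹ * x⁻¹ := by group
        rwa [h3] at h2
      have hinv : ∀ (y : K) (hyN : y ∈ N), y ∈ transUpperCentralSeries K δ →
          ∀ k' : K, F ⟨k' * y * k'⁻¹, hNn.conj_mem y hyN k'⟩ = F ⟨y, hyN⟩ :=
        ih δ (Order.lt_succ δ)
      -- the homomorphism k ↦ F([k,x])
      let g : K →* A :=
        { toFun := fun k' => F ⟨k' * x * k'⁻¹ * x⁻¹, hcommN k'⟩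
          map_one' := by
            show F ⟨1 * x * 1⁻¹ * x⁻¹, hcommN 1⟩ = 1
            have h1 : (⟨1 * x * 1⁻¹ * x⁻¹, hcommN 1⟩ : N) = 1 :=
              Subtype.ext (by show (1:K) * x * 1⁻¹ * x⁻¹ = 1; group)
            rw [h1, map_one]
          map_mul' := by
            intro k₁ k₂
            have h1 : (⟨k₁ * k₂ * x * (k₁ * k₂)⁻¹ * x⁻¹, hcommN (k₁ * k₂)⟩ : N) =
                ⟨k₁ * (k₂ * x * k₂⁻¹ * x⁻¹) * k₁⁻¹,
                  hNn.conj_mem _ (hcommN k₂) k₁⟩ * ⟨k₁ * x * k₁⁻¹ * x⁻¹, hcommN k₁⟩ :=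
              Subtype.ext (by
                show k₁ * k₂ * x * (k₁ * k₂)⁻¹ * x⁻¹ =
                  (k₁ * (k₂ * x * k₂⁻¹ * x⁻¹) * k₁⁻¹) * (k₁ * x * k₁⁻¹ * x⁻¹)
                group)
            show F ⟨k₁ * k₂ * x * (k₁ * k₂)⁻¹ * x⁻¹, hcommN (k₁ * k₂)⟩ =
              F ⟨k₁ * x * k₁⁻¹ * x⁻¹, hcommN k₁⟩ * F ⟨k₂ * x * k₂⁻¹ * x⁻¹, hcommN k₂⟩
            rw [h1, map_mul, hinv _ (hcommN k₂) (hcommZ k₂) k₁]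
            exact mul_comm _ _ }
      have hgN : ∀ n ∈ N, g n = 1 := by
        intro n hn
        show F ⟨n * x * n⁻¹ * x⁻¹, hcommN n⟩ = 1
        have h1 : (⟨n * x * n⁻¹ * x⁻¹, hcommN n⟩ : N) = ⁅(⟨n, hn⟩ : N), ⟨x, hx⟩⁆ :=
          Subtype.ext (by simp [commutatorElement_def])
        rw [h1, map_commutatorElement]
        exact commutatorElement_eq_one_iff_mul_comm.2 (mul_comm _ _)
      have hcomm1 : F ⟨k * x * k⁻¹ * x⁻¹, hcommN k⟩ = 1 := hchi g hgN k
      have h2 : (⟨k * x * k⁻¹, hNn.conj_mem x hx k⟩ : N) =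
          ⟨k * x * k⁻¹ * x⁻¹, hcommN k⟩ * ⟨x, hx⟩ := Subtype.ext (by
            show k * x * k⁻¹ = (k * x * k⁻¹ * x⁻¹) * x
            group)
      rw [h2, map_mul, hcomm1, one_mul]
    · rcases tucs_mem_limit K hlim hxZ with ⟨β, hβγ, hxβ⟩
      exact ih β hβγ x hx hxβ k


/-- Let `K` be a group and `H ≤ K` contained in the hypercentre of `K`.  If `K` has
property (χ) with respect to `H` (i.e. `Hom(K/H^K, Z(H)) = 0`), then the normal closure
`N = H^K` also has property (χ) with respect to `H` (i.e. `Hom(N/H^N, Z(H)) = 0`). -/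
theorem chi_of_normalClosure {K : Type u} [Group K] (H : Subgroup K)
    (hhyp : H ≤ hypercenter K)
    (hchi : ∀ f : (K ⧸ Subgroup.normalClosure (H : Set K)) →* Subgroup.center H, f = 1) :
    ∀ f : ((Subgroup.normalClosure (H : Set K)) ⧸
        Subgroup.normalClosure
          ((H.subgroupOf (Subgroup.normalClosure (H : Set K)) :
            Subgroup (Subgroup.normalClosure (H : Set K))) :
              Set (Subgroup.normalClosure (H : Set K)))) →*
      Subgroup.center H, f = 1 := by
  intro f
  let N : Subgroup K := Subgroup.normalClosure (H : Set K)
  haveI hNn : N.Normal := Subgroup.normalClosure_normal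
  let M : Subgroup N := Subgroup.normalClosure ((H.subgroupOf N : Subgroup N) : Set N)
  haveI hMn : M.Normal := Subgroup.normalClosure_normal
  let F : N →* Subgroup.center H := f.comp (QuotientGroup.mk' M)
  haveI : (hypercenter K).Normal := hypercenter_normal K
  have hNhyp : N ≤ hypercenter K := Subgroup.normalClosure_le_normal hhyp
  have hchi' : ∀ g : K →* Subgroup.center H, (∀ n ∈ N, g n = 1) → ∀ k : K, g k = 1 := by
    intro g hg k
    have hker : N ≤ g.ker := fun n hn => MonoidHom.mem_ker.2 (hg n hn)
    have h1 := hchi (QuotientGroup.lift N g hker)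
    have h2 : QuotientGroup.lift N g hker ((QuotientGroup.mk k : K ⧸ N)) = g k := rfl
    rw [h1] at h2
    simpa using h2.symm
  have hinv : ∀ (x : K) (hx : x ∈ N) (k : K),
      F ⟨k * x * k⁻¹, hNn.conj_mem x hx k⟩ = F ⟨x, hx⟩ := by
    intro x hx k
    obtain ⟨o, ho⟩ := mem_hypercenter_iff K (hNhyp hx)
    open scoped IsMulCommutative in exact @chi_invariant K _ N hNn (Subgroup.center H) _ F hchi' o x hx ho k
  have hFH : ∀ (h : K) (hh : h ∈ H) (hhN : h ∈ N), F ⟨h, hhN⟩ = 1 := by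
    intro h hh hhN
    have hm : (⟨h, hhN⟩ : N) ∈ M := Subgroup.subset_normalClosure
      (by rwa [SetLike.mem_coe, Subgroup.mem_subgroupOf])
    show f ((QuotientGroup.mk' M) ⟨h, hhN⟩) = 1
    have h1 : (QuotientGroup.mk' M) ⟨h, hhN⟩ = 1 := (QuotientGroup.eq_one_iff _).2 hm
    rw [h1, map_one]
  let D : Subgroup K := Subgroup.map N.subtype F.ker
  have hDmem : ∀ x : K, x ∈ D ↔ ∃ hx : x ∈ N, F ⟨x, hx⟩ = 1 := by
    intro x
    constructor
    · intro hx
      rw [Subgroup.mem_map] at hx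
      obtain ⟨⟨y, hy⟩, hker, rfl⟩ := hx
      exact ⟨hy, MonoidHom.mem_ker.1 hker⟩
    · rintro ⟨hx, h1⟩
      exact Subgroup.mem_map.2 ⟨⟨x, hx⟩, MonoidHom.mem_ker.2 h1, rfl⟩
  haveI hDn : D.Normal := by
    constructor
    intro x hx k
    rw [hDmem] at hx ⊢
    obtain ⟨hxN, hx1⟩ := hx
    exact ⟨hNn.conj_mem x hxN k, by rw [hinv x hxN k]; exact hx1⟩
  have hND : N ≤ D := Subgroup.normalClosure_le_normal
    (fun h hh => (hDmem h).2 ⟨Subgroup.subset_normalClosure hh, hFH h hh _⟩)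
  have hF1 : ∀ n : N, F n = 1 := by
    intro n
    obtain ⟨x, hx⟩ := n
    exact ((hDmem x).1 (hND hx)).2
  refine MonoidHom.ext fun q => ?_
  refine QuotientGroup.induction_on q fun n => ?_
  rw [MonoidHom.one_apply]
  exact hF1 n
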